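/- Under the Setup, the following two conditions are equivalent. (Assumption 7) For each support point θ* ∈ S(p,Θ_I) there exist constants δ < 0 and ε > 0 such that every unit vector t ∈ ℝ^d with p·t ≥ δ satisfies max{ max_{j∈J1*(θ*)} D_j(θ*)·t , max_{J1<j≤J} |D_j(θ*)·t| } > ε. (Assumption 7') For each support point θ* ∈ S(p,Θ_I) there exists a constant c > 0 such that p·t ≤ −c‖t‖ for every t in the linearized cone L(θ*). -/
import Mathlib


open Filter Topology Metric RealInnerProductSpace

noncomputable section

/-- The abstract Setup (Assumption 1) of Kaido–Molinari–Stoye: a compact convex parameter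
space `Θ ⊆ ℝ^d` with nonempty interior, `J` continuously differentiable constraint
functions `g j` (inequality constraints for `j < J1`, equality constraints for
`J1 ≤ j`), with (continuous) gradients `D j`, and a direction of projection `p ≠ 0`. -/
structure PISetup (d J J1 : ℕ) where
  Θ : Set (EuclideanSpace ℝ (Fin d))
  g : Fin J → EuclideanSpace ℝ (Fin d) → ℝ
  D : Fin J → EuclideanSpace ℝ (Fin d) → EuclideanSpace ℝ (Fin d)
  p : EuclideanSpace ℝ (Fin d)
  hd : 1 ≤ d
  hJ : 1 ≤ J
  hJ1 : J1 ≤ J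
  compactΘ : IsCompact Θ
  convexΘ : Convex ℝ Θ
  intΘ_nonempty : (interior Θ).Nonempty
  hgrad : ∀ (j : Fin J) (θ : EuclideanSpace ℝ (Fin d)), HasGradientAt (g j) (D j θ) θ
  hgradCont : ∀ j : Fin J, Continuous (D j)
  hp : p ≠ 0

namespace PISetup

variable {d J J1 : ℕ}

/-- The identified set `Θ_I`. -/
def idSet (S : PISetup d J J1) : Set (EuclideanSpace ℝ (Fin d)) :=
  {θ ∈ S.Θ | ∀ j : Fin J, ((j : ℕ) < J1 → S.g j θ ≤ 0) ∧ (J1 ≤ (j : ℕ) → S.g j θ = 0)}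

/-- The support set `S(p, Θ_I)`: the maximizers of `θ ↦ ⟪p, θ⟫` over `Θ_I`. -/
def suppSet (S : PISetup d J J1) : Set (EuclideanSpace ℝ (Fin d)) :=
  {θ ∈ S.idSet | ∀ θ' ∈ S.idSet, ⟪S.p, θ'⟫ ≤ ⟪S.p, θ⟫}

/-- The criterion `Q(θ) = max{0, max_{j< J1} g_j(θ), max_{J1 ≤ j} |g_j(θ)|}`. -/
def crit (S : PISetup d J J1) (θ : EuclideanSpace ℝ (Fin d)) : ℝ :=
  max 0 (⨆ j : Fin J, if (j : ℕ) < J1 then S.g j θ else |S.g j θ|)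

/-- The ball `B(θ*, η) = {θ ∈ Θ : ‖θ - θ*‖ ≤ η}`. -/
def ball (S : PISetup d J J1) (θs : EuclideanSpace ℝ (Fin d)) (η : ℝ) :
    Set (EuclideanSpace ℝ (Fin d)) :=
  {θ ∈ S.Θ | ‖θ - θs‖ ≤ η}

/-- The supporting hyperplane `H(p, Θ_I)`, described relative to a support point `θ*`. -/
def hyper (S : PISetup d J J1) (θs : EuclideanSpace ℝ (Fin d)) :
    Set (EuclideanSpace ℝ (Fin d)) :=
  {θ ∈ S.Θ | ⟪S.p, θ⟫ = ⟪S.p, θs⟫}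

/-- The tangent cone `T(θ*)` to `Θ_I` at `θ*`. -/
def tangentConeAt (S : PISetup d J J1) (θs : EuclideanSpace ℝ (Fin d)) :
    Set (EuclideanSpace ℝ (Fin d)) :=
  insert 0 {t | ∃ u : ℕ → EuclideanSpace ℝ (Fin d),
    (∀ n, u n ∈ S.idSet ∧ u n ≠ θs) ∧ Tendsto u atTop (𝓝 θs) ∧
    Tendsto (fun n => ‖u n - θs‖⁻¹ • (u n - θs)) atTop (𝓝 (‖t‖⁻¹ • t))}

/-- The linearized cone `L(θ*)`. -/
def linConeAt (S : PISetup d J J1) (θs : EuclideanSpace ℝ (Fin d)) :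
    Set (EuclideanSpace ℝ (Fin d)) :=
  {t | (∀ j : Fin J, (j : ℕ) < J1 → S.g j θs = 0 → ⟪S.D j θs, t⟫ ≤ 0) ∧
       (∀ j : Fin J, J1 ≤ (j : ℕ) → ⟪S.D j θs, t⟫ = 0)}

/-- The active set `J*(θ)` of (equality or inequality) constraints. -/
def activeAt (S : PISetup d J J1) (θ : EuclideanSpace ℝ (Fin d)) : Set (Fin J) :=
  {j | ((j : ℕ) < J1 ∧ S.g j θ = 0) ∨ J1 ≤ (j : ℕ)}

end PISetup

/-- Lemma 1 (fifth equivalence): Assumption 7 ⇔ Assumption 7′.  In Assumption 7, the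
statement `max{max_{j ∈ J1*(θ*)} D_j(θ*)·t, max_{J1<j≤J} |D_j(θ*)·t|} > ε` is rendered
as the existence of some active inequality constraint `j` with `D_j(θ*)·t > ε` or some
equality constraint `j` with `|D_j(θ*)·t| > ε`. -/
theorem assumption7_iff_assumption7' {d J J1 : ℕ} (S : PISetup d J J1)
    (hIne : S.idSet.Nonempty) (hIint : S.idSet ⊆ interior S.Θ) :
    (∀ θs ∈ S.suppSet, ∃ δ < (0:ℝ), ∃ ε > (0:ℝ),
        ∀ t : EuclideanSpace ℝ (Fin d), ‖t‖ = 1 → δ ≤ ⟪S.p, t⟫ →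
          ∃ j : Fin J, ((j : ℕ) < J1 ∧ S.g j θs = 0 ∧ ε < ⟪S.D j θs, t⟫) ∨
            (J1 ≤ (j : ℕ) ∧ ε < |⟪S.D j θs, t⟫|)) ↔
    (∀ θs ∈ S.suppSet, ∃ c > (0:ℝ),
        ∀ t ∈ S.linConeAt θs, ⟪S.p, t⟫ ≤ -c * ‖t‖) := by
  constructor
  · -- Assumption 7 ⇒ Assumption 7'
    intro H θs hθs
    obtain ⟨δ, hδ, ε, hε, h7⟩ := H θs hθs
    refine ⟨-δ, by linarith, ?_⟩
    intro t ht
    rcases eq_or_ne t 0 with rfl | htne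
    · simp
    · have hnt : (0:ℝ) < ‖t‖ := norm_pos_iff.mpr htne
      set u := ‖t‖⁻¹ • t with hu
      have hun : ‖u‖ = 1 := by
        rw [hu, norm_smul, norm_inv, norm_norm, inv_mul_cancel₀ (ne_of_gt hnt)]
      have hpu : ⟪S.p, u⟫ < δ := by
        by_contra hcon
        push_neg at hcon
        obtain ⟨j, hj⟩ := h7 u hun hcon
        rcases hj with ⟨hjlt, hg0, hlt⟩ | ⟨hjge, hlt⟩
        · have h1 : ⟪S.D j θs, t⟫ ≤ 0 := ht.1 j hjlt hg0
          have h2 : ⟪S.D j θs, u⟫ ≤ 0 := by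
            rw [hu, real_inner_smul_right]
            exact mul_nonpos_of_nonneg_of_nonpos (by positivity) h1
          linarith
        · have h1 : ⟪S.D j θs, t⟫ = 0 := ht.2 j hjge
          rw [hu, real_inner_smul_right, h1, mul_zero, abs_zero] at hlt
          linarith
      have heq : ⟪S.p, t⟫ = ‖t‖ * ⟪S.p, u⟫ := by
        rw [hu, real_inner_smul_right]
        field_simp
      rw [heq]
      nlinarith [hpu, hnt]
  · -- Assumption 7' ⇒ Assumption 7
    intro H θs hθs
    obtain ⟨c, hc, h7'⟩ := H θs hθs
    set h : Fin J → EuclideanSpace ℝ (Fin d) → ℝ := fun j t =>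
      if (j:ℕ) < J1 then (if S.g j θs = 0 then ⟪S.D j θs, t⟫ else 0)
      else |⟪S.D j θs, t⟫| with hh
    have hcont : ∀ j, Continuous (h j) := by
      intro j
      simp only [hh]
      split_ifs with h1 h2
      · exact continuous_const.inner continuous_id
      · exact continuous_const
      · exact (continuous_const.inner continuous_id).abs
    set K := Metric.sphere (0:EuclideanSpace ℝ (Fin d)) 1 ∩ {t | -(c/2) ≤ ⟪S.p, t⟫} with hK
    have hKc : IsCompact K := (isCompact_sphere 0 1).inter_right
      (isClosed_le continuous_const (continuous_const.inner continuous_id))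
    have hJne : (Finset.univ : Finset (Fin J)).Nonempty := ⟨⟨0, S.hJ⟩, Finset.mem_univ _⟩
    set f : EuclideanSpace ℝ (Fin d) → ℝ :=
      fun t => Finset.univ.sup' hJne (fun j => h j t) with hf
    have hfc : Continuous f :=
      Continuous.finset_sup'_apply hJne (fun j _ => hcont j)
    have hfpos : ∀ t ∈ K, 0 < f t := by
      intro t htK
      have htn : ‖t‖ = 1 := mem_sphere_zero_iff_norm.mp htK.1
      have hpt : -(c/2) ≤ ⟪S.p, t⟫ := htK.2
      have htL : t ∉ S.linConeAt θs := by
        intro hmem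
        have := h7' t hmem
        rw [htn] at this
        linarith
      simp only [PISetup.linConeAt, Set.mem_setOf_eq, not_and_or] at htL
      push_neg at htL
      rcases htL with ⟨j, hjlt, hg0, hpos⟩ | ⟨j, hjge, hne0⟩
      · have hle : h j t ≤ f t := Finset.le_sup' (fun j => h j t) (Finset.mem_univ j)
        have : h j t = ⟪S.D j θs, t⟫ := by simp [hh, hjlt, hg0]
        linarith
      · have hle : h j t ≤ f t := Finset.le_sup' (fun j => h j t) (Finset.mem_univ j)
        have hlt : ¬ ((j:ℕ) < J1) := not_lt.mpr hjge
        have heq : h j t = |⟪S.D j θs, t⟫| := by simp [hh, hlt]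
        have : 0 < |⟪S.D j θs, t⟫| := abs_pos.mpr hne0
        linarith
    rcases Set.eq_empty_or_nonempty K with hKe | hKne
    · refine ⟨-(c/2), by linarith, 1, one_pos, ?_⟩
      intro t htn hpt
      have : t ∈ K := ⟨mem_sphere_zero_iff_norm.mpr htn, hpt⟩
      rw [hKe] at this
      exact absurd this (Set.notMem_empty t)
    · obtain ⟨x0, hx0K, hx0min⟩ := hKc.exists_isMinOn hKne hfc.continuousOn
      refine ⟨-(c/2), by linarith, f x0 / 2, by linarith [hfpos x0 hx0K], ?_⟩
      intro t htn hpt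
      have htK : t ∈ K := ⟨mem_sphere_zero_iff_norm.mpr htn, hpt⟩
      have hft : f x0 / 2 < f t := by linarith [hfpos x0 hx0K, isMinOn_iff.mp hx0min t htK]
      obtain ⟨j, -, hj⟩ := (Finset.lt_sup'_iff hJne).mp hft
      by_cases hjlt : (j:ℕ) < J1
      · by_cases hg0 : S.g j θs = 0
        · refine ⟨j, Or.inl ⟨hjlt, hg0, ?_⟩⟩
          simpa [hh, hjlt, hg0] using hj
        · have : h j t = 0 := by simp [hh, hjlt, hg0]
          rw [this] at hj
          linarith [hfpos x0 hx0K]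
      · refine ⟨j, Or.inr ⟨not_lt.mp hjlt, ?_⟩⟩
        simpa [hh, hjlt] using hj
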